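/- (Independence of all passed vectors per node) In a linear (k,α) MSR exact-regenerating code with k ≥ α + 1 and β = 1, for any non-systematic node m, any α of the k vectors v^{(m,1)},…,v^{(m,k)} passed by node m for regeneration of the k systematic nodes are linearly independent in F_q^{kα}. -/

import Mathlib

open Matrix

private lemma vecMul_cancel14 {F : Type*} [Field F] {n : Type*} [Fintype n] [DecidableEq n]
    {A B : Matrix n n F} (h : A * B = 1) {v : n → F} (hv : v ᵥ* A = 0) : v = 0 := by
  have h2 : v ᵥ* (A * B) = 0 := by rw [← Matrix.vecMul_vecMul, hv, Matrix.zero_vecMul]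
  simpa [h, Matrix.vecMul_one] using h2

/-- For `k ≥ α + 1`, in a linear `(k,α)` MSR exact-regenerating code (same setting as the
canonical-form lemma), any `α` of the `k` vectors `v^{(m,1)},…,v^{(m,k)}` passed by a
non-systematic node `m` for regeneration of the `k` systematic nodes are linearly
independent in `F^{kα}`. -/
theorem statement14 {F : Type*} [Field F] {k α s : ℕ}
    (hk : α + 1 ≤ k) (hs : α ≤ s)
    (G : (Fin k ⊕ Fin s) → Matrix (Fin α) (Fin k × Fin α) F)
    (x : (Fin k ⊕ Fin s) → Fin k → Fin α → F)
    (hsys : ∀ (m : Fin k) (i : Fin α) (q : Fin k × Fin α),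
      G (Sum.inl m) i q = if q.1 = m ∧ q.2 = i then 1 else 0)
    (hrecon : ∀ f : Fin k → (Fin k ⊕ Fin s), Function.Injective f →
      IsUnit (Matrix.det (Matrix.of fun p q : Fin k × Fin α => G (f p.1) p.2 q)))
    (hrepair : ∀ (l : Fin k) (D : Finset (Fin s)), D.card = α →
      ∃ Y : Fin α → (Fin k ⊕ Fin s) → F, ∀ (i : Fin α) (q : Fin k × Fin α),
        G (Sum.inl l) i q =
          (∑ m : Fin k, if m ≠ l then
              Y i (Sum.inl m) * ∑ j, x (Sum.inl m) l j * G (Sum.inl m) j q else 0)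
            + ∑ m ∈ D, Y i (Sum.inr m) * ∑ j, x (Sum.inr m) l j * G (Sum.inr m) j q) :
    ∀ (m : Fin s) (T : Finset (Fin k)), T.card = α →
      LinearIndependent F (fun l : T => fun q : Fin k × Fin α =>
        ∑ j, x (Sum.inr m) l j * G (Sum.inr m) j q) := by
  classical
  intro m T hT
  rcases Nat.eq_zero_or_pos α with hα0 | hα
  · have hTe : T = ∅ := Finset.card_eq_zero.mp (by omega)
    haveI : IsEmpty (↥T) := by rw [hTe]; exact Finset.isEmpty_coe_sort.mpr rfl
    exact linearIndependent_empty_type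
  by_contra hnind
  obtain ⟨g, hg0, l0, hgl0⟩ := Fintype.not_linearIndependent_iff.mp hnind
  -- helper set D containing m
  obtain ⟨D, hmD', hD⟩ := Finset.exists_superset_card_eq (s := {m}) (n := α)
    (by simp only [Finset.card_singleton]; omega) (by simpa using hs)
  have hmD : m ∈ D := hmD' (Finset.mem_singleton_self m)
  -- a systematic node outside T
  obtain ⟨p0, hp0⟩ : ∃ p0 : Fin k, p0 ∉ T := by
    by_contra h
    push_neg at h
    have : T = Finset.univ := Finset.eq_univ_iff_forall.mpr h
    rw [this, Finset.card_univ, Fintype.card_fin] at hT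
    omega
  -- abbreviations
  set M : Fin s → Fin k → Matrix (Fin α) (Fin α) F :=
    fun n p => Matrix.of fun i j' => G (Sum.inr n) i (p, j') with hM
  have hcard : Fintype.card (Fin α) = Fintype.card (↥D) := by
    simp [hD]
  set e : Fin α ≃ ↥D := Fintype.equivOfCardEq hcard with he
  -- injectivity of vecMul with the block matrices M n p
  have hMinj : ∀ (n : Fin s) (p : Fin k) (v : Fin α → F), v ᵥ* M n p = 0 → v = 0 := by
    intro n p v hv
    set f : Fin k → Fin k ⊕ Fin s := fun l' => if l' = p then Sum.inr n else Sum.inl l' with hf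
    have hfinj : Function.Injective f := by
      intro a b hab
      by_cases ha : a = p <;> by_cases hb : b = p <;>
        simp [hf, ha, hb] at hab <;> first | (subst ha; subst hb; rfl) | exact hab
    have hdet := hrecon f hfinj
    set A : Matrix (Fin k × Fin α) (Fin k × Fin α) F :=
      Matrix.of fun pr q : Fin k × Fin α => G (f pr.1) pr.2 q with hA
    have hA1 : A * A⁻¹ = 1 := Matrix.mul_nonsing_inv A hdet
    set V : Fin k × Fin α → F := fun pr =>
      if pr.1 = p then v pr.2 else -(∑ i, v i * G (Sum.inr n) i pr) with hV
    have hVA : V ᵥ* A = 0 := by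
      funext q
      have hterm : ∀ pr : Fin k × Fin α, V pr * A pr q =
          if pr.1 = p then v pr.2 * G (Sum.inr n) pr.2 q
          else (if q.1 = pr.1 ∧ q.2 = pr.2 then V pr else 0) := by
        rintro ⟨p', i⟩
        by_cases hp' : p' = p
        · simp [hV, hA, hf, hp']
        · simp only [hV, hA, hf, hp', if_false, Matrix.of_apply, if_neg hp']
          rw [hsys]
          by_cases hq : q.1 = p' ∧ q.2 = i <;> simp [hq]
      simp only [Matrix.vecMul, dotProduct, Pi.zero_apply]
      rw [Finset.sum_congr rfl (fun pr _ => hterm pr)]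
      rw [Fintype.sum_prod_type]
      rw [← Finset.add_sum_erase _ _ (Finset.mem_univ p)]
      have h1 : ∑ i, (if (p : Fin k) = p then v i * G (Sum.inr n) i q
          else (if q.1 = p ∧ q.2 = i then V (p, i) else 0)) = ∑ i, v i * G (Sum.inr n) i q := by
        simp
      rw [h1]
      have h2 : ∀ p' ∈ Finset.univ.erase p, (∑ i, if (p' : Fin k) = p then v i * G (Sum.inr n) i q
          else (if q.1 = p' ∧ q.2 = i then V (p', i) else 0))
          = if q.1 = p' then V q else 0 := by
        intro p' hp'
        have hp'p : p' ≠ p := (Finset.mem_erase.mp hp').1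
        simp only [if_neg hp'p]
        by_cases hq : q.1 = p'
        · rw [Finset.sum_eq_single q.2]
          · rw [if_pos ⟨hq, rfl⟩, if_pos hq, ← hq, Prod.mk.eta]
          · intro j _ hj; simp [Ne.symm hj]
          · simp
        · simp [hq]
      rw [Finset.sum_congr rfl h2]
      rcases eq_or_ne q.1 p with hq1 | hq1
      · have : ∀ p' ∈ Finset.univ.erase p, (if q.1 = p' then V q else 0) = 0 := by
          intro p' hp'; simp [hq1, Ne.symm ((Finset.mem_erase.mp hp').1)]
        rw [Finset.sum_congr rfl this, Finset.sum_const_zero, add_zero]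
        have h3 := congrFun hv q.2
        simp only [Matrix.vecMul, dotProduct, hM, Matrix.of_apply, Pi.zero_apply] at h3
        rw [← h3]
        apply Finset.sum_congr rfl
        intro i _
        rw [← hq1, Prod.mk.eta]
      · have h4 : ∑ p' ∈ Finset.univ.erase p, (if q.1 = p' then V q else 0) = V q := by
          rw [Finset.sum_eq_single q.1]
          · simp
          · intro p' _ hp'; simp [Ne.symm hp']
          · intro habs; exact absurd (Finset.mem_erase.mpr ⟨hq1, Finset.mem_univ _⟩) habs
        rw [h4]
        simp only [hV, if_neg hq1]
        ring
    have hV0 : V = 0 := vecMul_cancel14 hA1 hVA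
    funext i
    have := congrFun hV0 (p, i)
    simpa [hV] using this

  -- main facts from the repair equations
  have main : ∀ l : Fin k,
      LinearIndependent F (fun a : Fin α => (x (Sum.inr ↑(e a)) l) ᵥ* M (↑(e a)) l) ∧
      (∀ p : Fin k, p ≠ l → ∀ m' ∈ D, ∃ μ : F,
        (x (Sum.inr m') l) ᵥ* (M m' p) = μ • x (Sum.inl p) l) := by
    intro l
    obtain ⟨Y, hY⟩ := hrepair l D hD
    -- the simplified repair identity per block
    have hkey : ∀ (i : Fin α) (p : Fin k) (j' : Fin α),
        (if p = l ∧ j' = i then (1:F) else 0) =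
          (if p ≠ l then Y i (Sum.inl p) * x (Sum.inl p) l j' else 0)
            + ∑ m' ∈ D, Y i (Sum.inr m') * ((x (Sum.inr m') l) ᵥ* M m' p) j' := by
      intro i p j'
      have h1 := hY i (p, j')
      rw [hsys] at h1
      have hin : ∀ m'' : Fin k, (∑ j, x (Sum.inl m'') l j * G (Sum.inl m'') j (p, j'))
          = if p = m'' then x (Sum.inl m'') l j' else 0 := by
        intro m''
        by_cases h : p = m''
        · rw [if_pos h, Finset.sum_eq_single j']
          · rw [hsys, if_pos ⟨h, rfl⟩, mul_one]
          · intro j _ hj; rw [hsys, if_neg (by simp [Ne.symm hj]), mul_zero]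
          · simp
        · rw [if_neg h]
          apply Finset.sum_eq_zero
          intro j _
          rw [hsys, if_neg (by simp [h]), mul_zero]
      have hsum : (∑ m'' : Fin k, if m'' ≠ l then
          Y i (Sum.inl m'') * ∑ j, x (Sum.inl m'') l j * G (Sum.inl m'') j (p, j') else 0)
          = if p ≠ l then Y i (Sum.inl p) * x (Sum.inl p) l j' else 0 := by
        by_cases hpl : p = l
        · rw [if_neg (by simp [hpl])]
          apply Finset.sum_eq_zero
          intro m'' _
          by_cases hm'' : m'' = l
          · rw [if_neg (by simp [hm''])]
          · rw [if_pos hm'', hin, if_neg (by rw [hpl]; exact Ne.symm hm''), mul_zero]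
        · rw [if_pos hpl, Finset.sum_eq_single p]
          · rw [if_pos hpl, hin, if_pos rfl]
          · intro m'' _ hm''p
            by_cases hm'' : m'' = l
            · rw [if_neg (by simp [hm''])]
            · rw [if_pos hm'', hin, if_neg (Ne.symm hm''p), mul_zero]
          · simp
      rw [hsum] at h1
      have hw : ∀ m' : Fin s, (∑ j, x (Sum.inr m') l j * G (Sum.inr m') j (p, j'))
          = ((x (Sum.inr m') l) ᵥ* M m' p) j' := by
        intro m'
        simp [hM, Matrix.vecMul, dotProduct]
      simp only [hw] at h1
      simpa using h1
    -- the two block matrices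
    set B : Matrix (Fin α) (Fin α) F :=
      Matrix.of fun a j' => ((x (Sum.inr ↑(e a)) l) ᵥ* M (↑(e a)) l) j' with hB
    set Λ : Matrix (Fin α) (Fin α) F :=
      Matrix.of fun i a => Y i (Sum.inr ↑(e a)) with hΛ
    have hDsum : ∀ (f : Fin s → F), ∑ m' ∈ D, f m' = ∑ a : Fin α, f ↑(e a) := by
      intro f
      rw [← Finset.sum_coe_sort D f, ← Equiv.sum_comp e (fun d => f ↑d)]
    have hΛB : Λ * B = 1 := by
      ext i j'
      have h1 := hkey i l j'
      rw [hDsum (fun m' => Y i (Sum.inr m') * ((x (Sum.inr m') l) ᵥ* M m' l) j')] at h1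
      rw [if_neg (show ¬ l ≠ l by simp), zero_add] at h1
      simp only [true_and] at h1
      rw [Matrix.mul_apply, Matrix.one_apply]
      simp only [hB, hΛ, Matrix.of_apply]
      rw [← h1]
      by_cases h : i = j' <;> simp [h, eq_comm]
    have hBΛ : B * Λ = 1 := mul_eq_one_comm.mp hΛB
    constructor
    · rw [Fintype.linearIndependent_iff]
      intro c hc a
      have hcB : c ᵥ* B = 0 := by
        funext j'
        have := congrFun hc j'
        simpa [Matrix.vecMul, dotProduct, hB, Finset.sum_apply] using this
      have := vecMul_cancel14 hBΛ hcB
      exact congrFun this a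
    · intro p hpl m' hm'
      set a0 : Fin α := e.symm ⟨m', hm'⟩ with ha0
      set C : Matrix (Fin α) (Fin α) F :=
        Matrix.of fun a j' => ((x (Sum.inr ↑(e a)) l) ᵥ* M (↑(e a)) p) j' with hC
      have hΛC : Λ * C = Matrix.of fun i j' => -(Y i (Sum.inl p) * x (Sum.inl p) l j') := by
        ext i j'
        have h1 := hkey i p j'
        rw [hDsum (fun m' => Y i (Sum.inr m') * ((x (Sum.inr m') l) ᵥ* M m' p) j')] at h1
        rw [if_neg (by simp [hpl]), if_pos hpl] at h1
        rw [Matrix.mul_apply]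
        simp only [hC, hΛ, Matrix.of_apply]
        linear_combination -h1
      have hCeq : C = B * (Λ * C) := by
        rw [← Matrix.mul_assoc, hBΛ, Matrix.one_mul]
      refine ⟨∑ i, -(B a0 i * Y i (Sum.inl p)), ?_⟩
      funext j'
      have h2 : C a0 j' = ((x (Sum.inr m') l) ᵥ* M m' p) j' := by
        simp [hC, ha0]
      rw [← h2, hCeq]
      rw [Matrix.mul_apply]
      simp only [hΛC, Matrix.of_apply, Pi.smul_apply, smul_eq_mul, Finset.sum_mul]
      apply Finset.sum_congr rfl
      intro i _
      ring

  -- nonvanishing of local coefficient vectors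
  have hN : ∀ (l : Fin k), ∀ m' ∈ D, x (Sum.inr m') l ≠ 0 := by
    intro l m' hm' hx0
    have R1 := (main l).1
    have := R1.ne_zero (e.symm ⟨m', hm'⟩)
    apply this
    rw [Equiv.apply_symm_apply]
    simp only [hx0, Matrix.zero_vecMul]
  -- alignment with nonzero coefficient
  have hAL : ∀ (l p : Fin k), p ≠ l → ∀ m' ∈ D, ∃ μ : F, μ ≠ 0 ∧
      (x (Sum.inr m') l) ᵥ* (M m' p) = μ • x (Sum.inl p) l := by
    intro l p hpl m' hm'
    obtain ⟨μ, hμ⟩ := (main l).2 p hpl m' hm'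
    refine ⟨μ, fun h0 => ?_, hμ⟩
    rw [h0, zero_smul] at hμ
    exact hN l m' hm' (hMinj m' p _ hμ)
  have hp0ne : ∀ l : ↥T, p0 ≠ (l : Fin k) := fun l h => hp0 (h ▸ l.2)
  -- restrict the dependence to block p0
  have hg0' : ∑ l : ↥T, (g l) • ((x (Sum.inr m) ↑l) ᵥ* M m p0) = 0 := by
    funext j'
    have h1 := congrFun hg0 (p0, j')
    rw [Finset.sum_apply] at h1
    rw [Finset.sum_apply]
    simp only [Pi.smul_apply, Pi.zero_apply, smul_eq_mul] at h1 ⊢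
    rw [← h1]
    apply Finset.sum_congr rfl
    intro l _
    congr 1 <;> simp [hM, Matrix.vecMul, dotProduct]
  -- alignment coefficients for node m at block p0
  choose μ hμ0 hμeq using fun l : ↥T => hAL ↑l p0 (hp0ne l) m hmD
  have hdep : ∑ l : ↥T, (g l * μ l) • x (Sum.inl p0) ↑l = 0 := by
    rw [← hg0']
    apply Finset.sum_congr rfl
    intro l _
    rw [hμeq l, smul_smul]
  -- solve for the l0 term
  set d : ↥T → F := fun l => -(g l0 * μ l0)⁻¹ * (g l * μ l) with hd
  have hc0 : g l0 * μ l0 ≠ 0 := mul_ne_zero hgl0 (hμ0 l0)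
  have hx0 : x (Sum.inl p0) ↑l0
      = ∑ l ∈ Finset.univ.erase l0, d l • x (Sum.inl p0) ↑l := by
    rw [← Finset.add_sum_erase _ _ (Finset.mem_univ l0)] at hdep
    have h2 := eq_neg_of_add_eq_zero_left hdep
    calc x (Sum.inl p0) ↑l0 = (g l0 * μ l0)⁻¹ • ((g l0 * μ l0) • x (Sum.inl p0) ↑l0) :=
          (inv_smul_smul₀ hc0 _).symm
      _ = ∑ l ∈ Finset.univ.erase l0, d l • x (Sum.inl p0) ↑l := by
          rw [h2, smul_neg, Finset.smul_sum, ← Finset.sum_neg_distrib]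
          refine Finset.sum_congr rfl fun l _ => ?_
          rw [smul_smul, ← neg_smul, hd]
          congr 1
          ring
  -- the span W
  set W : Submodule F (Fin α → F) :=
    Submodule.span F ↑((T.erase ↑l0).image (fun l => x (Sum.inl ↑l0) l)) with hW
  -- every row of the block-l0 matrix lies in W
  have hmem : ∀ n : ↥D, ((x (Sum.inr ↑n) ↑l0) ᵥ* M ↑n ↑l0) ∈ W := by
    intro n
    obtain ⟨ν0, hν00, hν0eq⟩ := hAL ↑l0 p0 (hp0ne l0) ↑n n.2
    choose ν hν0' hνeq using fun l : ↥T => hAL ↑l p0 (hp0ne l) ↑n n.2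
    have hxeq : x (Sum.inr ↑n) ↑l0
        = ∑ l ∈ Finset.univ.erase l0, (ν0 * d l * (ν l)⁻¹) • x (Sum.inr ↑n) ↑l := by
      have hdiff : (x (Sum.inr ↑n) ↑l0
          - ∑ l ∈ Finset.univ.erase l0, (ν0 * d l * (ν l)⁻¹) • x (Sum.inr ↑n) ↑l) ᵥ* M ↑n p0
          = 0 := by
        rw [← Matrix.vecMulLinear_apply, map_sub, map_sum]
        have h3 : ∀ l : ↥T, (M (↑n) p0).vecMulLinear ((ν0 * d l * (ν l)⁻¹) • x (Sum.inr ↑n) ↑l)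
            = (ν0 * d l) • x (Sum.inl p0) ↑l := by
          intro l
          rw [_root_.map_smul, Matrix.vecMulLinear_apply, hνeq l, smul_smul]
          rw [mul_assoc, inv_mul_cancel₀ (hν0' l), mul_one]
        rw [Finset.sum_congr rfl (fun l _ => h3 l)]
        rw [Matrix.vecMulLinear_apply, hν0eq, hx0, Finset.smul_sum]
        rw [sub_eq_zero]
        apply Finset.sum_congr rfl
        intro l _
        rw [smul_smul]
      have := hMinj ↑n p0 _ hdiff
      rwa [sub_eq_zero] at this
    rw [hxeq, ← Matrix.vecMulLinear_apply, map_sum]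
    apply Submodule.sum_mem
    intro l hl
    rw [_root_.map_smul]
    apply Submodule.smul_mem
    rw [Matrix.vecMulLinear_apply]
    have hll0 : (↑l0 : Fin k) ≠ ↑l := by
      have : l ≠ l0 := (Finset.mem_erase.mp hl).1
      exact fun h => this (Subtype.coe_injective h.symm)
    obtain ⟨κ, hκ0, hκeq⟩ := hAL ↑l ↑l0 hll0 ↑n n.2
    rw [hκeq]
    apply Submodule.smul_mem
    apply Submodule.subset_span
    simp only [Finset.coe_image, Set.mem_image, Finset.mem_coe]
    exact ⟨↑l, Finset.mem_erase.mpr ⟨Ne.symm hll0, l.2⟩, rfl⟩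
  -- dimension contradiction
  have hli := (main ↑l0).1
  have hrange : Set.range (fun a : Fin α => (x (Sum.inr ↑(e a)) ↑l0) ᵥ* M (↑(e a)) ↑l0)
      ⊆ ↑W := by
    rintro _ ⟨a, rfl⟩
    exact hmem (e a)
  have hle : Submodule.span F
      (Set.range (fun a : Fin α => (x (Sum.inr ↑(e a)) ↑l0) ᵥ* M (↑(e a)) ↑l0)) ≤ W :=
    Submodule.span_le.mpr hrange
  have h1 : Module.finrank F (Submodule.span F
      (Set.range (fun a : Fin α => (x (Sum.inr ↑(e a)) ↑l0) ᵥ* M (↑(e a)) ↑l0))) = α := by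
    rw [finrank_span_eq_card hli, Fintype.card_fin]
  have h2 : Module.finrank F W ≤ α - 1 := by
    calc Module.finrank F W ≤ ((T.erase ↑l0).image (fun l => x (Sum.inl ↑l0) l)).card :=
          finrank_span_finset_le_card _
      _ ≤ (T.erase ↑l0).card := Finset.card_image_le
      _ = α - 1 := by rw [Finset.card_erase_of_mem l0.2, hT]
  have h3 : α ≤ Module.finrank F W :=
    le_trans (le_of_eq h1.symm) (Submodule.finrank_mono hle)
  omega
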